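/- Let S be a frame, M a finite projective graded S-module admitting a normal decomposition L = ⊕_i L_i, and let d = d(M) be the depth of M (the minimal i with L̄_i ≠ 0, where M ⊗_{S,ν} R = ⊕_i L̄_i). Then for every n ≤ d, the natural S_0-module map θ_n : M_n → M^τ := M ⊗_{S,τ} S_0 (the composite of the inclusion M_n ↪ M with the base-change map M → M^τ) is an isomorphism of S_0-modules. -/

import Mathlib

set_option linter.unusedSectionVars false
set_option linter.unusedVariables false

/-- A frame structure on a `ℤ`-graded commutative ring (see the paper of Daniels,
following Lau). -/
structure Frame (p : ℕ) (S : Type*) [CommRing S] (𝒜 : ℤ → AddSubgroup S)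
    [GradedRing 𝒜] where
  σ : S →+* S
  τ : S →+* S
  σ_mem : ∀ s : S, σ s ∈ 𝒜 0
  τ_mem : ∀ s : S, τ s ∈ 𝒜 0
  τ_id : ∀ s ∈ 𝒜 0, τ s = s
  τ_bij : ∀ n : ℕ, 1 ≤ n → Set.BijOn τ (𝒜 (-(n : ℤ)) : Set S) ((𝒜 0 : AddSubgroup S) : Set S)
  t : S
  t_mem : t ∈ 𝒜 (-1)
  τ_t : τ t = 1
  t_unique : ∀ t' ∈ 𝒜 (-1), τ t' = 1 → t' = t
  σ_frob : ∀ s ∈ 𝒜 0, σ s - s ^ p ∈ Ideal.span ({(p : S)} : Set S)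
  σ_t : σ t = (p : S)
  p_rad : ∀ y ∈ 𝒜 0, ∃ z ∈ 𝒜 0, ((p : S) * y + 1) * z = 1


section Aux

variable {S : Type*} [CommRing S] {𝒜 : ℤ → AddSubgroup S} [GradedRing 𝒜]
variable {M : Type*} [AddCommGroup M] [Module S M] {ℳ : ℤ → AddSubgroup M}
variable [DirectSum.Decomposition ℳ]

/-- degree-`k` projection -/
theorem proj_smul_homog
    (hsmul : ∀ (i j : ℤ), ∀ s ∈ 𝒜 i, ∀ x ∈ ℳ j, s • x ∈ ℳ (i + j))
    {r : ℤ} {s : S} (hs : s ∈ 𝒜 r) (k : ℤ) (g : M) :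
    ((DirectSum.decompose ℳ (s • g)) k : M) = s • ((DirectSum.decompose ℳ g) (k - r) : M) := by
  induction g using DirectSum.Decomposition.inductionOn ℳ with
  | zero => simp
  | @homogeneous i m =>
      obtain ⟨m, hm⟩ := m
      by_cases h : r + i = k
      · rw [DirectSum.decompose_of_mem_same ℳ (show s • m ∈ ℳ k from h ▸ hsmul r i s hs m hm),
          DirectSum.decompose_of_mem_same ℳ (show m ∈ ℳ (k - r) by rwa [show k - r = i by omega])]
      · rw [DirectSum.decompose_of_mem_ne ℳ (hsmul r i s hs m hm) h,
          DirectSum.decompose_of_mem_ne ℳ hm (show i ≠ k - r by omega), smul_zero]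
  | add x y hx hy => simp only [smul_add, DirectSum.decompose_add, DirectSum.add_apply,
      AddSubgroup.coe_add, hx, hy, smul_add]

theorem proj_finsum {α : Type*} (k : ℤ) (t : Finset α) (f : α → M) :
    ((DirectSum.decompose ℳ (∑ b ∈ t, f b)) k : M)
      = ∑ b ∈ t, ((DirectSum.decompose ℳ (f b)) k : M) := by
  classical
  induction t using Finset.induction_on with
  | empty =>
      simp only [Finset.sum_empty, DirectSum.decompose_zero, DirectSum.zero_apply,
        ZeroMemClass.coe_zero]
  | insert _ _ hb ih =>
      simp only [Finset.sum_insert hb, DirectSum.decompose_add, DirectSum.add_apply,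
        AddSubgroup.coe_add, ih]

theorem proj_smul_homog_right
    (hsmul : ∀ (i j : ℤ), ∀ s ∈ 𝒜 i, ∀ x ∈ ℳ j, s • x ∈ ℳ (i + j))
    (s : S) {i : ℤ} {y : M} (hy : y ∈ ℳ i) (k : ℤ) :
    ((DirectSum.decompose ℳ (s • y)) k : M) = ((DirectSum.decompose 𝒜 s) (k - i) : S) • y := by
  induction s using DirectSum.Decomposition.inductionOn 𝒜 with
  | zero => simp
  | @homogeneous r u =>
      obtain ⟨u, hu⟩ := u
      rw [proj_smul_homog hsmul hu k y]
      by_cases h : r = k - i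
      · rw [DirectSum.decompose_of_mem_same 𝒜 (h ▸ hu),
          DirectSum.decompose_of_mem_same ℳ (show y ∈ ℳ (k - r) by rwa [show k - r = i by omega])]
      · rw [DirectSum.decompose_of_mem_ne 𝒜 hu h,
          DirectSum.decompose_of_mem_ne ℳ hy (show i ≠ k - r by omega), smul_zero, zero_smul]
  | add x y hx hy => simp only [add_smul, DirectSum.decompose_add, DirectSum.add_apply,
      AddSubgroup.coe_add, hx, hy]

end Aux



section FrameAux

variable {p : ℕ} {S : Type*} [CommRing S] {𝒜 : ℤ → AddSubgroup S} [GradedRing 𝒜]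
variable (F : Frame p S 𝒜)

theorem Frame.t_pow_mem (j : ℕ) : F.t ^ j ∈ 𝒜 (-(j : ℤ)) := by
  have := SetLike.pow_mem_graded j F.t_mem
  rwa [show j • (-1 : ℤ) = -(j : ℤ) by simp] at this

theorem Frame.eq_tau_mul_tpow (j : ℕ) {s : S} (hs : s ∈ 𝒜 (-(j : ℤ))) :
    s = F.τ s * F.t ^ j := by
  rcases Nat.eq_zero_or_pos j with hj | hj
  · subst hj
    simpa using (F.τ_id s (by simpa using hs)).symm
  · have h1 : F.τ s * F.t ^ j ∈ 𝒜 (-(j : ℤ)) := by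
      have := SetLike.mul_mem_graded (F.τ_mem s) (F.t_pow_mem j)
      rwa [zero_add] at this
    refine (F.τ_bij j hj).injOn hs h1 ?_
    rw [map_mul, map_pow, F.τ_t, one_pow, mul_one, F.τ_id _ (F.τ_mem s)]

theorem Frame.t_mul_eq_zero (j : ℕ) {a : S} (ha : a ∈ 𝒜 (-(j : ℤ))) (h : F.t * a = 0) :
    a = 0 := by
  have hτ : F.τ a = 0 := by
    have : F.τ (F.t * a) = 0 := by rw [h, map_zero]
    rwa [map_mul, F.τ_t, one_mul] at this
  rw [F.eq_tau_mul_tpow j ha, hτ, zero_mul]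

theorem Frame.t_mul_eq_zero' {k : ℤ} (hk : k ≤ 0) {a : S} (ha : a ∈ 𝒜 k) (h : F.t * a = 0) :
    a = 0 := by
  refine F.t_mul_eq_zero (-k).toNat ?_ h
  rwa [show -(((-k).toNat : ℕ) : ℤ) = k by omega]

theorem Frame.eq_tau_mul_tpow' {k : ℤ} (hk : k ≤ 0) {s : S} (hs : s ∈ 𝒜 k) :
    s = F.τ s * F.t ^ (-k).toNat := by
  refine F.eq_tau_mul_tpow (-k).toNat ?_
  rwa [show -(((-k).toNat : ℕ) : ℤ) = k by omega]

theorem projS_mul_homog {r : ℤ} {u : S} (hu : u ∈ 𝒜 r) (k : ℤ) (s : S) :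
    ((DirectSum.decompose 𝒜 (u * s)) k : S) = u * ((DirectSum.decompose 𝒜 s) (k - r) : S) := by
  have := proj_smul_homog (ℳ := 𝒜)
    (fun i j a ha x hx => by simpa [smul_eq_mul] using SetLike.mul_mem_graded ha hx) hu k s
  simpa [smul_eq_mul] using this

theorem Frame.gen_mem_jacobson [hp : Fact p.Prime] (m : ℕ) (hm : 1 ≤ m) {a : S}
    (ha : a ∈ 𝒜 (m : ℤ)) {y : S} (hy : y ∈ 𝒜 0) :
    ∃ z ∈ 𝒜 0, (F.t ^ m * a * y + 1) * z = 1 := by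
  set x := F.t ^ m * a * y with hxdef
  have hx0 : x ∈ 𝒜 0 := by
    have h1 : F.t ^ m * a ∈ 𝒜 0 := by
      have := SetLike.mul_mem_graded (F.t_pow_mem m) ha
      rwa [neg_add_cancel] at this
    simpa using SetLike.mul_mem_graded h1 hy
  -- x ^ p ∈ (p)
  have hσ : F.σ x ∈ Ideal.span ({(p : S)} : Set S) := by
    have : F.σ x = (p : S) ^ m * (F.σ a * F.σ y) := by
      rw [hxdef, map_mul, map_mul, map_pow, F.σ_t]; ring
    rw [this, Ideal.mem_span_singleton]
    exact Dvd.dvd.mul_right (dvd_pow_self _ (by omega)) _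
  have hxp : x ^ p ∈ Ideal.span ({(p : S)} : Set S) := by
    have h2 := F.σ_frob x hx0
    have : x ^ p = F.σ x - (F.σ x - x ^ p) := by ring
    rw [this]; exact sub_mem hσ h2
  obtain ⟨s, hs⟩ := Ideal.mem_span_singleton.mp hxp
  -- refine to a degree-zero cofactor
  have hpmem : ((p : S)) ∈ 𝒜 0 := SetLike.natCast_mem_graded 𝒜 p
  have hxp0 : x ^ p ∈ 𝒜 0 := by
    have := SetLike.pow_mem_graded p hx0
    simpa using this
  obtain ⟨s₀, hs₀mem, hs₀⟩ : ∃ s₀ ∈ 𝒜 0, x ^ p = (p : S) * s₀ := by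
    refine ⟨((DirectSum.decompose 𝒜 s) 0 : S), SetLike.coe_mem _, ?_⟩
    have := projS_mul_homog (𝒜 := 𝒜) hpmem 0 s
    rw [← hs, DirectSum.decompose_of_mem_same 𝒜 hxp0] at this
    simpa using this
  -- geometric series inverse
  have geom : (x + 1) * (∑ k ∈ Finset.range p, (-x) ^ k) = 1 - (-x) ^ p := by
    have := geom_sum_mul (-x) p
    linear_combination -this
  have hgm : (∑ k ∈ Finset.range p, (-x) ^ k) ∈ 𝒜 0 := by
    refine AddSubgroup.sum_mem _ fun k _ => ?_
    have := SetLike.pow_mem_graded k (neg_mem hx0 : -x ∈ 𝒜 0)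
    simpa using this
  have key : 1 - (-x) ^ p = (p : S) * ((-1 : S) ^ (p + 1) * s₀) + 1 := by
    rw [neg_pow, hs₀]; ring
  have hy' : ((-1 : S) ^ (p + 1) * s₀) ∈ 𝒜 0 := by
    have h1 : ((-1 : S) ^ (p + 1)) ∈ 𝒜 0 := by
      have := SetLike.pow_mem_graded (p + 1) (neg_mem (SetLike.one_mem_graded 𝒜) : (-1 : S) ∈ 𝒜 0)
      simpa using this
    simpa using SetLike.mul_mem_graded h1 hs₀mem
  obtain ⟨z, hz0, hz⟩ := F.p_rad _ hy'
  refine ⟨(∑ k ∈ Finset.range p, (-x) ^ k) * z, by simpa using SetLike.mul_mem_graded hgm hz0, ?_⟩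
  calc (x + 1) * ((∑ k ∈ Finset.range p, (-x) ^ k) * z)
      = ((x + 1) * (∑ k ∈ Finset.range p, (-x) ^ k)) * z := by ring
    _ = 1 := by rw [geom, key, hz]

end FrameAux

/-- The degree-zero part `S₀` of a graded ring, as a subring. -/
def gradeZero {S : Type*} [CommRing S] (𝒜 : ℤ → AddSubgroup S) [GradedRing 𝒜] :
    Subring S where
  carrier := 𝒜 0
  mul_mem' := fun ha hb => by simpa using SetLike.mul_mem_graded ha hb
  one_mem' := SetLike.one_mem_graded 𝒜
  add_mem' := fun ha hb => add_mem ha hb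
  zero_mem' := zero_mem _
  neg_mem' := fun ha => neg_mem ha


set_option maxHeartbeats 2000000 in
/-- Let `S` be a frame, `M` a finite projective graded `S`-module with a
normal decomposition `L = ⊕ᵢ Lᵢ`, and let `d` be the depth of `M` (so the images `L̄ᵢ`
of the `Lᵢ` in `M ⊗_{S,ν} R = M/JM` vanish for `i < d`).  Then for every `n ≤ d` the
natural `S₀`-module map `θₙ : Mₙ → M^τ = M ⊗_{S,τ} S₀ = M/(t−1)M` (inclusion followed by
the quotient map) is bijective, hence an isomorphism of `S₀`-modules. -/
theorem stmt_6 (p : ℕ) [Fact p.Prime] (S : Type*) [CommRing S]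
    (𝒜 : ℤ → AddSubgroup S) [GradedRing 𝒜] (F : Frame p S 𝒜)
    (M : Type*) [AddCommGroup M] [Module S M]
    (ℳ : ℤ → AddSubgroup M) [DirectSum.Decomposition ℳ]
    (hsmul : ∀ (i j : ℤ), ∀ s ∈ 𝒜 i, ∀ x ∈ ℳ j, s • x ∈ ℳ (i + j))
    [Module.Finite S M] [Module.Projective S M]
    -- a normal decomposition `L` of `M`:
    (L : ℤ → Submodule (gradeZero 𝒜) M)
    (hLsub : ∀ i : ℤ, (L i : Set M) ⊆ (ℳ i : AddSubgroup M))
    (hLfin : ∀ i : ℤ, Module.Finite (gradeZero 𝒜) (L i))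
    (hLproj : ∀ i : ℤ, Module.Projective (gradeZero 𝒜) (L i))
    (hLbdd : {i : ℤ | L i ≠ ⊥}.Finite)
    (hLgen : ∀ n : ℤ, ℳ n =
      AddSubgroup.closure {m : M | ∃ i : ℤ, ∃ s ∈ 𝒜 (n - i), ∃ x ∈ L i, m = s • x})
    -- `d` is at most the depth of `M`: the reductions `L̄ᵢ` vanish for `i < d`:
    (d : ℤ)
    (hdepth : ∀ i : ℤ, i < d → (L i : Set M) ⊆
      ((Ideal.span {x : S | ∃ n : ℤ, n ≠ 0 ∧ x ∈ 𝒜 n} • (⊤ : Submodule S M) :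
        Submodule S M) : Set M)) :
    ∀ n : ℤ, n ≤ d →
      Function.Bijective (fun x : (ℳ n : AddSubgroup M) =>
        (Submodule.Quotient.mk (x : M) :
          M ⧸ (Ideal.span ({F.t - 1} : Set S) • (⊤ : Submodule S M) : Submodule S M))) := by
  classical
  -- abbreviations
  set J : Ideal S := Ideal.span {x : S | ∃ n : ℤ, n ≠ 0 ∧ x ∈ 𝒜 n} with hJdef
  set W : Submodule S M := Ideal.span ({F.t - 1} : Set S) • (⊤ : Submodule S M) with hWdef
  set I : Ideal (gradeZero 𝒜) :=
    Ideal.span {c : gradeZero 𝒜 | ∃ m : ℕ, 1 ≤ m ∧ ∃ a ∈ 𝒜 (m : ℤ), (c : S) = F.t ^ m * a} with hIdef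
  set G : ℤ → Submodule S M :=
    (fun j => Submodule.span S (⋃ (i : ℤ) (_ : j ≤ i), (L i : Set M))) with hGdef
  set U : ℤ → ℤ → AddSubgroup M := (fun j k => AddSubgroup.closure
    {m : M | ∃ i : ℤ, j ≤ i ∧ ∃ s ∈ 𝒜 (k - i), ∃ x ∈ L i, m = s • x}) with hUdef
  let π : ℤ → M → M := fun k m => ((DirectSum.decompose ℳ m) k : M)
  have hπ_mem : ∀ k m, π k m ∈ ℳ k := fun k m => SetLike.coe_mem _
  have hπ_same : ∀ k {x}, x ∈ ℳ k → π k x = x := fun k x hx =>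
    DirectSum.decompose_of_mem_same ℳ hx
  have hπ_ne : ∀ {k k' : ℤ} {x}, x ∈ ℳ k → k ≠ k' → π k' x = 0 := fun hx hne =>
    DirectSum.decompose_of_mem_ne ℳ hx hne
  have hπ_add : ∀ k x y, π k (x + y) = π k x + π k y := by
    intro k x y
    simp only [π, DirectSum.decompose_add, DirectSum.add_apply, AddSubgroup.coe_add]
  have hπ_smul : ∀ {r : ℤ} {s : S}, s ∈ 𝒜 r → ∀ (k : ℤ) (g : M),
      π k (s • g) = s • π (k - r) g := fun hs k g => proj_smul_homog hsmul hs k g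
  -- the subgroups U j k are stable under homogeneous scalars
  have hπ_zero : ∀ k, π k 0 = 0 := by intro k; simp [π]
  have hπ_neg : ∀ k x, π k (-x) = -π k x := by
    intro k x
    have h : π k (-x) + π k x = 0 := by
      rw [← hπ_add, neg_add_cancel]; exact hπ_zero k
    exact eq_neg_of_add_eq_zero_left h
  have hπ_sub : ∀ k x y, π k (x - y) = π k x - π k y := by
    intro k x y
    rw [sub_eq_add_neg, hπ_add, hπ_neg, sub_eq_add_neg]
  have hπ_sum : ∀ (k : ℤ) {α : Type} (t : Finset α) (f : α → M),
      π k (∑ b ∈ t, f b) = ∑ b ∈ t, π k (f b) := by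
    intro k α t f
    induction t using Finset.induction_on with
    | empty => simpa using hπ_zero k
    | insert _ _ hb ih => rw [Finset.sum_insert hb, hπ_add, ih, Finset.sum_insert hb]
  have hUsmul : ∀ (j : ℤ) {r : ℤ} {s : S}, s ∈ 𝒜 r → ∀ (k : ℤ) (w : M),
      w ∈ U j (k - r) → s • w ∈ U j k := by
    intro j r s hs k w hw
    refine AddSubgroup.closure_induction ?_ ?_ ?_ ?_ hw
    · rintro x ⟨i, hji, s', hs', z, hz, rfl⟩
      refine AddSubgroup.subset_closure ⟨i, hji, s * s', ?_, z, hz, (mul_smul s s' z).symm⟩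
      have := SetLike.mul_mem_graded hs hs'
      rwa [show r + (k - r - i) = k - i by ring] at this
    · rw [smul_zero]; exact zero_mem _
    · intro x y hx hy hx' hy'
      rw [smul_add]; exact add_mem hx' hy'
    · intro x hx hx'
      rw [smul_neg]; exact neg_mem hx'
  -- graded pieces of G j
  have hGproj : ∀ (j : ℤ) (g : M), g ∈ G j → ∀ k, π k g ∈ U j k := by
    intro j g hg
    refine Submodule.span_induction ?_ ?_ ?_ ?_ hg
    · intro x hx k
      obtain ⟨i, hji, hxi⟩ := Set.mem_iUnion₂.mp hx
      have hxm : x ∈ ℳ i := hLsub i hxi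
      by_cases hki : i = k
      · subst hki
        rw [hπ_same i hxm]
        refine AddSubgroup.subset_closure ⟨i, hji, 1, ?_, x, hxi, (one_smul S x).symm⟩
        rw [show i - i = 0 by ring]
        exact SetLike.one_mem_graded 𝒜
      · rw [hπ_ne hxm hki]; exact zero_mem _
    · intro k; rw [hπ_zero]; exact zero_mem _
    · intro x y hx hy hx' hy' k
      rw [hπ_add]; exact add_mem (hx' k) (hy' k)
    · intro a x hx hx' k
      rw [← DirectSum.sum_support_decompose 𝒜 a, Finset.sum_smul, hπ_sum]
      refine AddSubgroup.sum_mem _ fun r _ => ?_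
      rw [hπ_smul (SetLike.coe_mem ((DirectSum.decompose 𝒜 a) r)) k x]
      exact hUsmul j (SetLike.coe_mem _) k _ (hx' (k - r))
  -- I is contained in the Jacobson radical of S₀
  have h_jac : I ≤ Ideal.jacobson ⊥ := by
    rw [hIdef, Ideal.span_le]
    rintro c ⟨m, hm, a, ha, hc⟩
    rw [SetLike.mem_coe, Ideal.mem_jacobson_bot]
    intro y
    obtain ⟨z, hz0, hz⟩ := F.gen_mem_jacobson m hm ha y.2
    refine IsUnit.of_mul_eq_one (⟨z, hz0⟩ : gradeZero 𝒜) (Subtype.ext ?_)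
    show ((c : S) * (y : S) + 1) * z = 1
    rw [hc]; exact hz
  -- lower bound for the support of L
  obtain ⟨j₀, hj₀d, hj₀⟩ : ∃ j₀ : ℤ, j₀ ≤ d ∧ ∀ i < j₀, L i = ⊥ := by
    rcases hLbdd.bddBelow with ⟨b, hb⟩
    refine ⟨min b d, min_le_right _ _, fun i hi => ?_⟩
    by_contra h
    have := hb (show i ∈ {i : ℤ | L i ≠ ⊥} from h)
    omega
  -- G j is everything provided the lower L's are inside
  have hGtop : ∀ j : ℤ, (∀ i < j, (L i : Set M) ⊆ (G j : Set M)) → ∀ m : M, m ∈ G j := by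
    intro j hj m
    induction m using DirectSum.Decomposition.inductionOn ℳ with
    | zero => exact zero_mem _
    | homogeneous x =>
        rename_i k
        have hx : (x : M) ∈ AddSubgroup.closure
            {m : M | ∃ i : ℤ, ∃ s ∈ 𝒜 (k - i), ∃ x ∈ L i, m = s • x} := (hLgen k) ▸ x.2
        refine AddSubgroup.closure_induction ?_ ?_ ?_ ?_ hx
        · rintro w ⟨i, s, hs, z, hz, rfl⟩
          by_cases hij : j ≤ i
          · exact Submodule.smul_mem _ s (Submodule.subset_span (Set.mem_iUnion₂.mpr ⟨i, hij, hz⟩))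
          · exact Submodule.smul_mem _ s (hj i (by omega) hz)
        · exact zero_mem _
        · intro a b _ _ ha hb; exact add_mem ha hb
        · intro a _ ha; exact neg_mem ha
    | add a b ha hb => exact add_mem ha hb
  -- main induction: low L's can be absorbed
  have hmemG : ∀ (j' i' : ℤ), j' ≤ i' → ∀ z ∈ L i', (z : M) ∈ G j' := by
    intro j' i' hji' z hz
    exact Submodule.subset_span (Set.mem_iUnion₂.mpr ⟨i', hji', hz⟩)
  have hP : ∀ j : ℤ, j₀ ≤ j → j ≤ d → ∀ i < j, (L i : Set M) ⊆ (G j : Set M) := by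
    refine Int.le_induction ?_ ?_
    · intro _ i hi x hx
      rw [hj₀ i hi] at hx
      simp only [Submodule.bot_coe, Set.mem_singleton_iff] at hx
      rw [hx]
      exact SetLike.mem_coe.mpr (zero_mem _)
    · intro j hj ih hjd1
      have hjd : j < d := by omega
      have ihj : ∀ i < j, (L i : Set M) ⊆ (G j : Set M) := ih (show j ≤ d by omega)
      -- the key claim: L j is contained in I • (L j) + G (j+1)
      have hVkey : ∀ x ∈ L j, x ∈ ((I • L j : Submodule (gradeZero 𝒜) M) ⊔
          (G (j + 1)).restrictScalars (gradeZero 𝒜)) := by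
        have hJproj : ∀ m ∈ (J • (⊤ : Submodule S M) : Submodule S M),
            π j m ∈ ((I • L j : Submodule (gradeZero 𝒜) M) ⊔
              (G (j + 1)).restrictScalars (gradeZero 𝒜)) := by
          intro m hm
          refine Submodule.smul_induction_on hm ?_ ?_
          · intro a ha g hgtop
            clear hgtop
            revert g
            refine Submodule.span_induction ?_ ?_ ?_ ?_ ha
            · rintro u ⟨n0, hn0, hu⟩ g
              rw [hπ_smul hu j g]
              have hw : π (j - n0) g ∈ AddSubgroup.closure
                  {m : M | ∃ i : ℤ, ∃ s ∈ 𝒜 (j - n0 - i), ∃ x ∈ L i, m = s • x} :=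
                (hLgen (j - n0)) ▸ (hπ_mem (j - n0) g)
              refine AddSubgroup.closure_induction ?_ ?_ ?_ ?_ hw
              · rintro w ⟨i, s, hs, z, hz, rfl⟩
                by_cases hij : j + 1 ≤ i
                · rw [← mul_smul]
                  exact Submodule.mem_sup_right (Submodule.smul_mem _ _ (hmemG _ i hij z hz))
                · -- i ≤ j, so z ∈ G j; expand via U j i
                  have hzG : z ∈ G j := by
                    rcases eq_or_lt_of_le (show i ≤ j by omega) with h | h
                    · exact hmemG j i (le_of_eq h.symm) z hz
                    · exact ihj i h hz
                  have hzU : z ∈ U j i := by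
                    have := hGproj j z hzG i
                    rwa [hπ_same i (hLsub i hz)] at this
                  refine AddSubgroup.closure_induction ?_ ?_ ?_ ?_ hzU
                  · rintro w ⟨i', hji', s', hs', z', hz', rfl⟩
                    rw [← mul_smul, ← mul_smul]
                    by_cases hij' : j + 1 ≤ i'
                    · exact Submodule.mem_sup_right (Submodule.smul_mem _ _
                        (hmemG _ i' hij' z' hz'))
                    · have hi'j : i' = j := by omega
                      rw [hi'j] at hs' hz'
                      have hss' : s * s' ∈ 𝒜 (-n0) := by
                        have := SetLike.mul_mem_graded hs hs'
                        rwa [show j - n0 - i + (i - j) = -n0 by ring] at this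
                      have hcmem0 : u * (s * s') ∈ 𝒜 0 := by
                        have := SetLike.mul_mem_graded hu hss'
                        rwa [add_neg_cancel] at this
                      have hcI : (⟨u * (s * s'), hcmem0⟩ : gradeZero 𝒜) ∈ I := by
                        rcases lt_or_gt_of_ne hn0 with hneg | hpos
                        · -- n0 < 0 : u = τ u * t ^ m
                          set m := (-n0).toNat with hmdef
                          have hueq : u = F.τ u * F.t ^ m := F.eq_tau_mul_tpow' (by omega) hu
                          have hgmem : F.t ^ m * (s * s') ∈ 𝒜 0 := by
                            have := SetLike.mul_mem_graded (F.t_pow_mem m) hss'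
                            rwa [show -((m : ℕ) : ℤ) + -n0 = 0 by omega] at this
                          have hgen : (⟨F.t ^ m * (s * s'), hgmem⟩ : gradeZero 𝒜) ∈ I := by
                            rw [hIdef]
                            refine Ideal.subset_span ⟨m, by omega, s * s', ?_, rfl⟩
                            rwa [show ((m : ℕ) : ℤ) = -n0 by omega]
                          have := Ideal.mul_mem_left I
                            (⟨F.τ u, F.τ_mem u⟩ : gradeZero 𝒜) hgen
                          convert this using 1
                          refine Subtype.ext ?_
                          show u * (s * s') = F.τ u * (F.t ^ m * (s * s'))
                          conv_lhs => rw [hueq]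
                          ring
                        · -- n0 > 0 : s * s' = τ (s * s') * t ^ m
                          set m := n0.toNat with hmdef
                          have hsseq : s * s' = F.τ (s * s') * F.t ^ m := by
                            have := F.eq_tau_mul_tpow' (show -n0 ≤ 0 by omega) hss'
                            rwa [show (-(-n0)).toNat = m by omega] at this
                          have hgmem : F.t ^ m * u ∈ 𝒜 0 := by
                            have := SetLike.mul_mem_graded (F.t_pow_mem m) hu
                            rwa [show -((m : ℕ) : ℤ) + n0 = 0 by omega] at this
                          have hgen : (⟨F.t ^ m * u, hgmem⟩ : gradeZero 𝒜) ∈ I := by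
                            rw [hIdef]
                            refine Ideal.subset_span ⟨m, by omega, u, ?_, rfl⟩
                            rwa [show ((m : ℕ) : ℤ) = n0 by omega]
                          have := Ideal.mul_mem_left I
                            (⟨F.τ (s * s'), F.τ_mem (s * s')⟩ : gradeZero 𝒜) hgen
                          convert this using 1
                          refine Subtype.ext ?_
                          show u * (s * s') = F.τ (s * s') * (F.t ^ m * u)
                          conv_lhs => rw [hsseq]
                          ring
                      have hcsm : (u * s * s') • z' =
                          ((⟨u * (s * s'), hcmem0⟩ : gradeZero 𝒜) • z' : M) := by
                        rw [show u * s * s' = u * (s * s') by ring]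
                        rfl
                      rw [hcsm]
                      exact Submodule.mem_sup_left (Submodule.smul_mem_smul hcI hz')
                  · rw [smul_zero, smul_zero]; exact zero_mem _
                  · intro w₁ w₂ _ _ h₁ h₂
                    rw [smul_add, smul_add]; exact add_mem h₁ h₂
                  · intro w₁ _ h₁
                    rw [smul_neg, smul_neg]; exact neg_mem h₁
              · rw [smul_zero]; exact zero_mem _
              · intro w₁ w₂ _ _ h₁ h₂
                rw [smul_add]; exact add_mem h₁ h₂
              · intro w₁ _ h₁
                rw [smul_neg]; exact neg_mem h₁
            · intro g
              rw [zero_smul, hπ_zero]; exact zero_mem _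
            · intro a b _ _ hpa hpb g
              rw [add_smul, hπ_add]; exact add_mem (hpa g) (hpb g)
            · intro c a _ hpa g
              rw [smul_eq_mul, mul_comm, mul_smul]
              exact hpa (c • g)
          · intro x y hx hy
            rw [hπ_add]; exact add_mem hx hy
        intro x hxLj
        have hxJ : x ∈ (J • ⊤ : Submodule S M) := hdepth j hjd hxLj
        have := hJproj x hxJ
        rwa [hπ_same j (hLsub j hxLj)] at this
      -- Nakayama
      have hLjG : (L j : Set M) ⊆ (G (j + 1) : Set M) := by
        set N' : Submodule (gradeZero 𝒜) M :=
          (G (j + 1)).restrictScalars (gradeZero 𝒜) with hN'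
        have hQfg : ((L j).map N'.mkQ).FG := (Module.Finite.iff_fg.mp (hLfin j)).map N'.mkQ
        have hQle : (L j).map N'.mkQ ≤ I • ((L j).map N'.mkQ) := by
          rintro _ ⟨x, hx, rfl⟩
          have hxV := hVkey x hx
          rw [Submodule.mem_sup] at hxV
          obtain ⟨v, hv, w, hw, hvw⟩ := hxV
          rw [← hvw, map_add]
          have hw0 : N'.mkQ w = 0 := by
            rw [Submodule.mkQ_apply, Submodule.Quotient.mk_eq_zero]
            exact hw
          rw [hw0, add_zero]
          have hv' : N'.mkQ v ∈ Submodule.map N'.mkQ (I • L j) :=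
            Submodule.mem_map_of_mem hv
          rwa [Submodule.map_smul''] at hv'
        have hQbot := Submodule.eq_bot_of_le_smul_of_le_jacobson_bot I _ hQfg hQle h_jac
        intro x hx
        have hq : N'.mkQ x ∈ (L j).map N'.mkQ := Submodule.mem_map_of_mem hx
        rw [hQbot, Submodule.mem_bot] at hq
        have : x ∈ N' := by
          rwa [← Submodule.ker_mkQ N', LinearMap.mem_ker]
        exact this
      have hGmono : G j ≤ G (j + 1) := by
        refine Submodule.span_le.mpr ?_
        intro v hv
        obtain ⟨i', hji', hvi'⟩ := Set.mem_iUnion₂.mp hv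
        rcases eq_or_lt_of_le hji' with h | h
        · exact hLjG (h ▸ hvi')
        · exact hmemG (j + 1) i' (by omega) v hvi'
      intro i hi
      rcases lt_or_ge i j with h | h
      · exact (ihj i h).trans hGmono
      · have : i = j := by omega
        subst this
        exact hLjG
  have hGd : ∀ m : M, m ∈ G d := hGtop d (hP d hj₀d le_rfl)
  have hMUd : ∀ (k : ℤ) (x : M), x ∈ ℳ k → x ∈ U d k := by
    intro k x hx
    have := hGproj d x (hGd x) k
    rwa [hπ_same k hx] at this
  -- dividing by t in low degrees
  have htdvd : ∀ k : ℤ, k < d → ∀ x ∈ ℳ k, ∃ y ∈ ℳ (k + 1), x = F.t • y := by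
    intro k hk x hx
    refine AddSubgroup.closure_induction ?_ ?_ ?_ ?_ (hMUd k x hx)
    · rintro w ⟨i, hdi, s, hs, z, hz, rfl⟩
      have hneg : k - i ≤ 0 := by omega
      have hseq := F.eq_tau_mul_tpow' hneg hs
      obtain ⟨jm', hjm'⟩ : ∃ jm', (-(k - i)).toNat = jm' + 1 := ⟨(-(k - i)).toNat - 1, by omega⟩
      have hcmem : F.τ s * F.t ^ jm' ∈ 𝒜 (k + 1 - i) := by
        have := SetLike.mul_mem_graded (F.τ_mem s) (F.t_pow_mem jm')
        rwa [show (0 : ℤ) + -(jm' : ℤ) = k + 1 - i by omega] at this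
      refine ⟨(F.τ s * F.t ^ jm') • z, ?_, ?_⟩
      · have := hsmul (k + 1 - i) i _ hcmem z (hLsub i hz)
        rwa [show k + 1 - i + i = k + 1 by ring] at this
      · conv_lhs => rw [hseq, hjm']
        rw [show F.τ s * F.t ^ (jm' + 1) = F.t * (F.τ s * F.t ^ jm') by ring, mul_smul]
    · exact ⟨0, zero_mem _, (smul_zero F.t).symm⟩
    · rintro a b _ _ ⟨ya, hya, rfl⟩ ⟨yb, hyb, rfl⟩
      exact ⟨ya + yb, add_mem hya hyb, (smul_add F.t ya yb).symm⟩
    · rintro a _ ⟨ya, hya, rfl⟩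
      exact ⟨-ya, neg_mem hya, (smul_neg F.t ya).symm⟩
  have htdvdpow : ∀ (jj : ℕ) (k : ℤ), k + jj ≤ d → ∀ x ∈ ℳ k,
      ∃ y ∈ ℳ (k + jj), x = F.t ^ jj • y := by
    intro jj
    induction jj with
    | zero => intro k hk x hx; exact ⟨x, by simpa using hx, by simp⟩
    | succ jj ih =>
        intro k hk x hx
        obtain ⟨y₁, hy₁, hxy₁⟩ := htdvd k (by push_cast at hk ⊢; omega) x hx
        obtain ⟨y, hy, hy₁y⟩ := ih (k + 1) (by push_cast at hk ⊢; omega) y₁ hy₁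
        refine ⟨y, by rwa [show k + 1 + (jj : ℤ) = k + ((jj : ℤ) + 1) by ring] at hy, ?_⟩
        rw [hxy₁, hy₁y, ← mul_smul, ← pow_succ']
  -- injectivity of t in low degrees
  have htinj : ∀ k : ℤ, k ≤ d → ∀ x ∈ ℳ k, F.t • x = 0 → x = 0 := by
    -- choose finite generating sets of the L i
    have hfg : ∀ i : ℤ, ∃ C : Finset M,
        (C : Set M) ⊆ (L i : Set M) ∧ Submodule.span (gradeZero 𝒜) (C : Set M) = L i := by
      intro i
      obtain ⟨C, hC⟩ := Module.Finite.iff_fg.mp (hLfin i)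
      exact ⟨C, hC ▸ Submodule.subset_span, hC⟩
    choose C hCsub hCspan using hfg
    have hfin : ({i : ℤ | L i ≠ ⊥} ∩ {i : ℤ | d ≤ i}).Finite :=
      hLbdd.subset Set.inter_subset_left
    -- the index type for a free cover with homogeneous images of degrees ≥ d
    let ι : Type _ := Σ i : hfin.toFinset, {v : M // v ∈ C (i : ℤ)}
    let y : ι → M := fun b => (b.2 : M)
    let deg : ι → ℤ := fun b => (b.1 : ℤ)
    have hydeg : ∀ b : ι, y b ∈ ℳ (deg b) := fun b => hLsub _ (hCsub _ b.2.2)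
    have hddeg : ∀ b : ι, d ≤ deg b := by
      intro b
      have := b.1.2
      rw [Set.Finite.mem_toFinset] at this
      exact this.2
    have hspan : Submodule.span S (Set.range y) = ⊤ := by
      rw [eq_top_iff]
      intro m _
      refine Submodule.span_le.mpr ?_ (hGd m)
      intro v hv
      obtain ⟨i, hdi, hvi⟩ := Set.mem_iUnion₂.mp hv
      by_cases hbot : L i = ⊥
      · have : v = 0 := by rwa [hbot, Submodule.bot_coe, Set.mem_singleton_iff] at hvi
        rw [this]; exact zero_mem _
      · have hiF : i ∈ hfin.toFinset := by
          rw [Set.Finite.mem_toFinset]; exact ⟨hbot, hdi⟩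
        have h1 : v ∈ Submodule.span (gradeZero 𝒜) (C i : Set M) := by rw [hCspan]; exact hvi
        have h2 : v ∈ Submodule.span S (C i : Set M) :=
          Submodule.span_subset_span (gradeZero 𝒜) S _ h1
        refine Submodule.span_le.mpr ?_ h2
        intro w hw
        exact Submodule.subset_span ⟨⟨⟨i, hiF⟩, ⟨w, hw⟩⟩, rfl⟩
    have hsurj : Function.Surjective (Finsupp.linearCombination S y) := by
      rw [← LinearMap.range_eq_top, Finsupp.range_linearCombination, hspan]
    obtain ⟨σl, hσl⟩ := Module.projective_lifting_property (Finsupp.linearCombination S y)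
      LinearMap.id hsurj
    -- the splitting argument
    intro k hk x hx hxt
    have hrep : x = ∑ b ∈ (σl x).support,
        ((DirectSum.decompose 𝒜 ((σl x) b)) (k - deg b) : S) • y b := by
      have h1 : Finsupp.linearCombination S y (σl x) = x := by
        have := LinearMap.congr_fun hσl x
        rwa [LinearMap.comp_apply, LinearMap.id_apply] at this
      have h2 : x = ∑ b ∈ (σl x).support, ((σl x) b) • y b := by
        conv_lhs => rw [← h1, Finsupp.linearCombination_apply]
        rfl
      calc x = π k x := (hπ_same k hx).symm
        _ = ∑ b ∈ (σl x).support, π k (((σl x) b) • y b) := by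
              conv_lhs => rw [h2]
              exact proj_finsum k _ _
        _ = ∑ b ∈ (σl x).support,
              ((DirectSum.decompose 𝒜 ((σl x) b)) (k - deg b) : S) • y b := by
              refine Finset.sum_congr rfl fun b _ => ?_
              exact proj_smul_homog_right hsmul _ (hydeg b) k
    have hc0 : ∀ b : ι, ((DirectSum.decompose 𝒜 ((σl x) b)) (k - deg b) : S) = 0 := by
      intro b
      have h1 : F.t • σl x = 0 := by
        rw [← map_smul, hxt, map_zero]
      have h2 : F.t * (σl x) b = 0 := by
        have := DFunLike.congr_fun h1 b
        simpa [Finsupp.smul_apply, smul_eq_mul] using this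
      have h3 : F.t * ((DirectSum.decompose 𝒜 ((σl x) b)) (k - deg b) : S) = 0 := by
        have h4 := projS_mul_homog (𝒜 := 𝒜) F.t_mem (k - 1 - deg b) ((σl x) b)
        rw [h2] at h4
        rw [show k - 1 - deg b - (-1) = k - deg b by ring] at h4
        rw [← h4]
        simp
      exact F.t_mul_eq_zero' (by have := hddeg b; omega) (SetLike.coe_mem _) h3
    rw [hrep]
    refine Finset.sum_eq_zero fun b _ => ?_
    rw [hc0 b, zero_smul]
  have htinjpow : ∀ (jj : ℕ) (k : ℤ), k ≤ d → ∀ x ∈ ℳ k, F.t ^ jj • x = 0 → x = 0 := by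
    intro jj
    induction jj with
    | zero => intro k hk x hx h; simpa using h
    | succ jj ih =>
        intro k hk x hx h
        have h1 : F.t ^ jj • (F.t • x) = 0 := by
          rw [← mul_smul, ← pow_succ]; exact h
        have h2 : F.t • x ∈ ℳ (k - 1) := by
          have := hsmul (-1) k F.t F.t_mem x hx
          rwa [show (-1 : ℤ) + k = k - 1 by ring] at this
        exact htinj k hk x hx (ih (k - 1) (by omega) _ h2 h1)
  -- finiteness of supports
  have hbddA : ∀ m : M, ∃ K : ℤ, ∀ k, K ≤ k → π k m = 0 := by
    intro m
    induction m using DirectSum.Decomposition.inductionOn ℳ with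
    | zero => exact ⟨0, fun k _ => hπ_zero k⟩
    | homogeneous x =>
        rename_i i
        exact ⟨i + 1, fun k hk => hπ_ne x.2 (by omega)⟩
    | add a b ha hb =>
        obtain ⟨Ka, hKa⟩ := ha; obtain ⟨Kb, hKb⟩ := hb
        exact ⟨max Ka Kb, fun k hk => by
          rw [hπ_add, hKa k (by omega), hKb k (by omega), add_zero]⟩
  have hbddB : ∀ m : M, ∃ K : ℤ, ∀ k, k ≤ K → π k m = 0 := by
    intro m
    induction m using DirectSum.Decomposition.inductionOn ℳ with
    | zero => exact ⟨0, fun k _ => hπ_zero k⟩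
    | homogeneous x =>
        rename_i i
        exact ⟨i - 1, fun k hk => hπ_ne x.2 (by omega)⟩
    | add a b ha hb =>
        obtain ⟨Ka, hKa⟩ := ha; obtain ⟨Kb, hKb⟩ := hb
        exact ⟨min Ka Kb, fun k hk => by
          rw [hπ_add, hKa k (by omega), hKb k (by omega), add_zero]⟩
  -- membership in W
  have hWmem : ∀ (c : S) (m : M), c ∈ Ideal.span ({F.t - 1} : Set S) → c • m ∈ W := by
    intro c m hc
    exact Submodule.smul_mem_smul hc trivial
  have hWrep : ∀ z ∈ W, ∃ m : M, z = (F.t - 1) • m := by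
    intro z hz
    refine Submodule.smul_induction_on hz ?_ ?_
    · intro r hr m _
      obtain ⟨c, hc⟩ := Ideal.mem_span_singleton.mp hr
      exact ⟨c • m, by rw [hc, mul_smul]⟩
    · rintro x y ⟨mx, rfl⟩ ⟨my, rfl⟩
      exact ⟨mx + my, by rw [smul_add]⟩
  have hpowW : ∀ (jj : ℕ) (m : M), (F.t ^ jj - 1) • m ∈ W := by
    intro jj m
    refine hWmem _ m ?_
    rw [Ideal.mem_span_singleton]
    simpa using sub_dvd_pow_sub_pow F.t 1 jj
  -- final assembly
  intro n hn
  constructor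
  · -- injectivity
    have hz0 : ∀ z, z ∈ ℳ n → z ∈ W → z = 0 := by
      intro z hzn hzW
      obtain ⟨m, hm⟩ := hWrep z hzW
      have hcomp : ∀ k : ℤ, π k z = F.t • π (k + 1) m - π k m := by
        intro k
        have h1 : z = F.t • m - m := by rw [hm, sub_smul, one_smul]
        rw [h1, hπ_sub, hπ_smul F.t_mem k m, show k - (-1) = k + 1 by ring]
      have hrec : ∀ k : ℤ, k ≠ n → π k m = F.t • π (k + 1) m := by
        intro k hkn
        have h2 : π k z = 0 := hπ_ne hzn (fun h => hkn h.symm)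
        have h3 := hcomp k
        rw [h2] at h3
        exact (sub_eq_zero.mp h3.symm).symm
      obtain ⟨K, hK⟩ := hbddA m
      have hup : ∀ (jj : ℕ) (k : ℤ), n < k → π k m = F.t ^ jj • π (k + jj) m := by
        intro jj
        induction jj with
        | zero => intro k hk; simp
        | succ jj ih =>
            intro k hk
            rw [hrec k (by omega), ih (k + 1) (by omega), ← mul_smul, ← pow_succ',
              show k + 1 + (jj : ℤ) = k + ((jj : ℤ) + 1) by ring]
            norm_cast
      have hup0 : ∀ k : ℤ, n < k → π k m = 0 := by
        intro k hk
        rcases le_or_gt K k with h | h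
        · exact hK k h
        · rw [hup (K - k).toNat k hk, hK _ (by omega), smul_zero]
      have hzeq : z = -π n m := by
        rw [← hπ_same n hzn, hcomp n, hup0 (n + 1) (by omega), smul_zero, zero_sub]
      have hlow : ∀ jj : ℕ, 1 ≤ jj → π (n - jj) m = F.t ^ jj • π n m := by
        intro jj hjj
        induction jj with
        | zero => omega
        | succ jj ih =>
            push_cast
            rcases Nat.eq_zero_or_pos jj with h0 | h0
            · subst h0
              push_cast
              rw [hrec (n - 1) (by omega), show n - 1 + 1 = n by ring, pow_one]
            · rw [hrec (n - ((jj : ℤ) + 1)) (by omega),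
                show n - ((jj : ℤ) + 1) + 1 = n - jj by ring, ih h0, ← mul_smul, ← pow_succ']
      obtain ⟨K', hK'⟩ := hbddB m
      have hjj : (1 : ℕ) ≤ max 1 (n - K').toNat := le_max_left _ _
      have h4 : π (n - (max 1 (n - K').toNat : ℕ)) m = 0 := hK' _ (by omega)
      have h5 : F.t ^ (max 1 (n - K').toNat) • π n m = 0 := by
        rw [← hlow _ hjj, h4]
      have h6 : π n m = 0 := htinjpow _ n hn _ (hπ_mem n m) h5
      rw [hzeq, h6, neg_zero]
    intro x y hxy
    simp only [Subtype.forall] at hxy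
    rw [Submodule.Quotient.eq] at hxy
    exact Subtype.ext (sub_eq_zero.mp (hz0 _ (sub_mem x.2 y.2) hxy))
  · -- surjectivity
    intro q
    obtain ⟨m, rfl⟩ := Submodule.Quotient.mk_surjective W q
    have key : ∀ m : M, ∃ x : (ℳ n : AddSubgroup M),
        (Submodule.Quotient.mk (x : M) : M ⧸ W) = Submodule.Quotient.mk m := by
      intro m
      induction m using DirectSum.Decomposition.inductionOn ℳ with
      | zero => exact ⟨0, by simp⟩
      | homogeneous x =>
          rename_i k
          rcases le_or_gt n k with hnk | hkn
          · have hmem : F.t ^ (k - n).toNat • (x : M) ∈ ℳ n := by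
              have := hsmul (-(((k - n).toNat : ℕ) : ℤ)) k _ (F.t_pow_mem (k - n).toNat) x x.2
              rwa [show -(((k - n).toNat : ℕ) : ℤ) + k = n by omega] at this
            refine ⟨⟨_, hmem⟩, ?_⟩
            rw [Submodule.Quotient.eq]
            have heq : F.t ^ (k - n).toNat • (x : M) - x =
                (F.t ^ (k - n).toNat - 1) • (x : M) := by rw [sub_smul, one_smul]
            rw [heq]
            exact hpowW _ _
          · have hle : k + (((n - k).toNat : ℕ) : ℤ) ≤ d := by omega
            obtain ⟨y, hy, hxy⟩ := htdvdpow (n - k).toNat k hle x x.2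
            have hy' : y ∈ ℳ n := by
              rwa [show k + (((n - k).toNat : ℕ) : ℤ) = n by omega] at hy
            refine ⟨⟨y, hy'⟩, ?_⟩
            rw [Submodule.Quotient.eq]
            have heq : y - (x : M) = -((F.t ^ (n - k).toNat - 1) • y) := by
              rw [sub_smul, one_smul, hxy]; abel
            rw [heq]
            exact neg_mem (hpowW _ _)
      | add a b ha hb =>
          obtain ⟨xa, hqa⟩ := ha
          obtain ⟨xb, hqb⟩ := hb
          refine ⟨xa + xb, ?_⟩
          rw [AddSubgroup.coe_add, Submodule.Quotient.mk_add, hqa, hqb,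
            ← Submodule.Quotient.mk_add]
    exact key m
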